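/- Let C be a class of functions {±1}^n → {±1} and let 𝒟 be a family of distributions over {±1}^n that is closed under restrictions. Let A be a deterministic learner such that for every D ∈ 𝒟, every f ∈ C, and every k ≥ m, E_{S ~ (D_f)^k}[error(A(S), D_f)] ≤ ε'. Let D* be a distribution over {±1}^n admitting a size-s depth-d subcube decomposition into 𝒟, witnessed by pairwise disjoint restrictions ρ₁, …, ρ_s, each of depth at most d, covering the support of D*, with (D*)_{ρ_i} ∈ 𝒟 for every i. Let f ∈ C and let m_train ≥ (s/ε')·max(2m, 8). Draw S_train consisting of m_train i.i.d. samples from D*_f and define H(ρ) := A((S_train)_ρ) for every restriction ρ. Then E_{S_train}[error(P∘H, D*_f)] ≤ 2ε', where P∘H(x) = H(ρ_i)(x) for the unique i (if any) with x consistent with ρ_i and ⊥ (counted as a misclassification) otherwise. -/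

import Mathlib

open scoped Classical

/-- Points of the cube `{±1}^n`, encoded as `Fin n → Bool`. -/
abbrev Cube (n : ℕ) := Fin n → Bool

/-- Restrictions `ρ ∈ {±1,⋆}^n`, with `none` playing the role of `⋆`. -/
abbrev Rst (n : ℕ) := Fin n → Option Bool

/-- Labeled examples. -/
abbrev Lab (n : ℕ) := Cube n × Bool

/-- `x` is consistent with the restriction `ρ`. -/
def Consistent {n : ℕ} (x : Cube n) (ρ : Rst n) : Prop :=
  ∀ i : Fin n, ∀ b : Bool, ρ i = some b → x i = b

/-- The depth (number of non-⋆ coordinates) of a restriction. -/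
def rdepth {n : ℕ} (ρ : Rst n) : ℕ :=
  (Finset.univ.filter (fun i => ρ i ≠ none)).card

/-- `IsDT n d T` : `T` is the set of leaf restrictions of a depth-`d` decision tree over `{±1}^n`. -/
inductive IsDT (n : ℕ) : ℕ → Finset (Rst n) → Prop
  | leaf : IsDT n 0 {fun _ => none}
  | node {d : ℕ} (i : Fin n) {T₀ T₁ : Finset (Rst n)} :
      IsDT n d T₀ → IsDT n d T₁ →
      (∀ ℓ ∈ T₀, ℓ i = none) → (∀ ℓ ∈ T₁, ℓ i = none) →
      IsDT n (d + 1)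
        (T₀.image (fun ℓ => Function.update ℓ i (some false)) ∪
         T₁.image (fun ℓ => Function.update ℓ i (some true)))

/-- Empirical error of a hypothesis on a labeled multiset. -/
noncomputable def errS {n : ℕ} (h : Cube n → Bool) (S : Multiset (Lab n)) : ℝ :=
  ((S.filter (fun p => h p.1 ≠ p.2)).card : ℝ) / (S.card : ℝ)

/-- Empirical error of a partial (`Option Bool`-valued) hypothesis on a labeled multiset;
`⊥ = none` always counts as a misclassification. -/
noncomputable def errSo {n : ℕ} (h : Cube n → Option Bool) (S : Multiset (Lab n)) : ℝ :=
  ((S.filter (fun p => h p.1 ≠ some p.2)).card : ℝ) / (S.card : ℝ)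

/-- True error of a hypothesis with respect to a distribution on labeled examples. -/
noncomputable def errD {n : ℕ} (h : Cube n → Bool) (D : Lab n → ℝ) : ℝ :=
  ∑ p : Lab n, if h p.1 ≠ p.2 then D p else 0

/-- True error of a partial hypothesis with respect to a distribution on labeled examples. -/
noncomputable def errDo {n : ℕ} (h : Cube n → Option Bool) (D : Lab n → ℝ) : ℝ :=
  ∑ p : Lab n, if h p.1 ≠ some p.2 then D p else 0

/-- The multiset of samples of a tuple. -/
def toMS {α : Type*} {m : ℕ} (y : Fin m → α) : Multiset α := ↑(List.ofFn y)

/-- `T ∘ H` : the decision-tree-composed hypothesis. -/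
noncomputable def treeHyp {n : ℕ} (T : Finset (Rst n)) (H : Rst n → Cube n → Bool)
    (x : Cube n) : Bool :=
  if h : ∃ ℓ, ℓ ∈ T ∧ Consistent x ℓ then H h.choose x else false

/-- `P ∘ H` : the subcube-partition-composed hypothesis (`none` = ⊥ off the partition). -/
noncomputable def partHyp {n s : ℕ} (ρ : Fin s → Rst n) (H : Rst n → Cube n → Bool)
    (x : Cube n) : Option Bool :=
  if h : ∃ i, Consistent x (ρ i) then some (H (ρ h.choose) x) else none

/-- `L ∘ H` : the subcube-list-composed hypothesis (first consistent subcube wins). -/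
noncomputable def listHyp {n : ℕ} (H : Rst n → Cube n → Bool) :
    List (Rst n) → Cube n → Option Bool
  | [], _ => none
  | π :: L, x => if Consistent x π then some (H π x) else listHyp H L x

/-- Mass of a distribution on the subcube of a restriction. -/
noncomputable def rmass {n : ℕ} (D : Cube n → ℝ) (ρ : Rst n) : ℝ :=
  ∑ x ∈ Finset.univ.filter (fun x => Consistent x ρ), D x

/-- `D` conditioned on the subcube of the restriction `ρ`. -/
noncomputable def condD {n : ℕ} (D : Cube n → ℝ) (ρ : Rst n) : Cube n → ℝ :=
  fun x => if Consistent x ρ then D x / rmass D ρ else 0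

/-- The labeled distribution `D_f` of `(x, f(x))`, `x ~ D`. -/
def labD {n : ℕ} (D : Cube n → ℝ) (f : Cube n → Bool) : Lab n → ℝ :=
  fun p => if p.2 = f p.1 then D p.1 else 0

section AuxLemmas
open Finset
variable {α : Type*} [Fintype α]

omit [Fintype α] in
lemma toMS_cons {N : ℕ} (a : α) (y : Fin N → α) : toMS (Fin.cons a y) = a ::ₘ toMS y := by
  simp [toMS, List.ofFn_succ]

lemma sum_pi_succ {N : ℕ} (F : (Fin (N+1) → α) → ℝ) :
    ∑ y : Fin (N+1) → α, F y = ∑ a : α, ∑ y : Fin N → α, F (Fin.cons a y) := by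
  rw [← (Fintype.sum_equiv (Fin.consEquiv (fun _ => α)) _ (fun y => F y) (fun x => rfl))]
  rw [Fintype.sum_prod_type]; rfl

lemma indep {N : ℕ} (g : Fin N → α → ℝ) :
    ∑ y : Fin N → α, ∏ j, g j (y j) = ∏ j, ∑ a, g j a := by
  rw [Finset.prod_univ_sum]
  rw [Fintype.piFinset_univ]

lemma binom_variance (N : ℕ) (p : ℝ) :
    ∑ k ∈ Finset.range (N+1), ((N:ℝ)*p - k)^2 * ((N.choose k : ℝ) * p^k * (1-p)^(N-k))
      = N * p * (1 - p) := by
  have h := congrArg (Polynomial.eval p) (bernsteinPolynomial.variance ℝ N)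
  simpa [Polynomial.eval_finset_sum, bernsteinPolynomial, mul_comm, mul_assoc, mul_left_comm] using h

lemma binom_sum (N : ℕ) (p : ℝ) :
    ∑ k ∈ Finset.range (N+1), (N.choose k : ℝ) * p^k * (1-p)^(N-k) = 1 := by
  have h := add_pow p (1-p) N
  simp only [add_sub_cancel, one_pow] at h
  calc ∑ k ∈ Finset.range (N+1), (N.choose k : ℝ) * p^k * (1-p)^(N-k)
      = ∑ k ∈ Finset.range (N+1), p^k * (1-p)^(N-k) * (N.choose k : ℝ) :=
        Finset.sum_congr rfl (fun k _ => by ring)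
    _ = 1 := h.symm

lemma cond_lemma (P : α → ℝ) (hP0 : ∀ a, 0 ≤ P a) (hP1 : ∑ a, P a = 1)
    (q : α → Prop)
    (p : ℝ) (hp : p = ∑ a ∈ Finset.univ.filter q, P a)
    (Pq : α → ℝ) (hPq : ∀ a, Pq a = if q a then P a / p else 0) :
    ∀ (N : ℕ) (G : Multiset α → ℝ),
    ∑ y : Fin N → α, (∏ j, P (y j)) * G ((toMS y).filter q)
      = ∑ k ∈ Finset.range (N+1), (N.choose k : ℝ) * p^k * (1-p)^(N-k) *
          ∑ z : Fin k → α, (∏ j, Pq (z j)) * G (toMS z) := by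
  have hp0 : 0 ≤ p := hp ▸ Finset.sum_nonneg (fun a _ => hP0 a)
  have hpPq : ∀ a, p * Pq a = if q a then P a else 0 := by
    intro a; rw [hPq a]
    by_cases h : q a
    · simp only [h, if_true]
      rcases eq_or_lt_of_le hp0 with h0 | h0
      · have hPa : P a = 0 :=
          (Finset.sum_eq_zero_iff_of_nonneg (fun a _ => hP0 a)).mp (hp ▸ h0.symm) a
            (by simp [h])
        simp [← h0, hPa]
      · field_simp
    · simp [h]
  have hq1 : ∑ a ∈ Finset.univ.filter (fun a => ¬ q a), P a = 1 - p := by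
    have := Finset.sum_filter_add_sum_filter_not Finset.univ q P
    rw [hP1, ← hp] at this; linarith
  have Esucc : ∀ (k : ℕ) (G : Multiset α → ℝ),
      (∑ z : Fin (k+1) → α, (∏ j, Pq (z j)) * G (toMS z))
        = ∑ a : α, Pq a * ∑ z : Fin k → α, (∏ j, Pq (z j)) * G (a ::ₘ toMS z) := by
    intro k G
    rw [sum_pi_succ (fun z => (∏ j, Pq (z j)) * G (toMS z))]
    refine Finset.sum_congr rfl fun a _ => ?_
    rw [Finset.mul_sum]
    refine Finset.sum_congr rfl fun z _ => ?_
    rw [Fin.prod_univ_succ, toMS_cons]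
    simp only [Fin.cons_zero, Fin.cons_succ]
    ring
  intro N
  induction N with
  | zero =>
    intro G
    simp [toMS]
  | succ N ih =>
    intro G
    -- abbreviations
    set E : ℕ → ℝ := fun k => ∑ z : Fin k → α, (∏ j, Pq (z j)) * G (toMS z) with hE
    set Ea : α → ℕ → ℝ :=
      fun a k => ∑ z : Fin k → α, (∏ j, Pq (z j)) * G (a ::ₘ toMS z) with hEa
    have hEsucc : ∀ k, E (k+1) = ∑ a : α, Pq a * Ea a k := fun k => Esucc k G
    set R : ℝ := ∑ k ∈ Finset.range (N+1), (N.choose k : ℝ) * p^k * (1-p)^(N-k) * E k with hR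
    set Ra : α → ℝ := fun a =>
      ∑ k ∈ Finset.range (N+1), (N.choose k : ℝ) * p^k * (1-p)^(N-k) * Ea a k with hRa
    have hgoal : (∑ k ∈ Finset.range (N+1+1), ((N+1).choose k : ℝ) * p^k * (1-p)^(N+1-k) *
          ∑ z : Fin k → α, (∏ j, Pq (z j)) * G (toMS z))
        = ∑ k ∈ Finset.range (N+1+1), ((N+1).choose k : ℝ) * p^k * (1-p)^(N+1-k) * E k :=
      Finset.sum_congr rfl fun k _ => rfl
    rw [hgoal]
    -- LHS computation
    rw [sum_pi_succ (fun y => (∏ j, P (y j)) * G ((toMS y).filter q))]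
    have step : ∀ a : α,
        (∑ y : Fin N → α, (∏ j, P ((Fin.cons a y : Fin (N+1) → α) j)) * G ((toMS (Fin.cons a y : Fin (N+1) → α)).filter q))
          = P a * (if q a then Ra a else R) := by
      intro a
      by_cases h : q a
      · simp only [h, if_true, hRa]
        rw [← ih (fun S => G (a ::ₘ S)), Finset.mul_sum]
        refine Finset.sum_congr rfl fun y _ => ?_
        rw [Fin.prod_univ_succ, toMS_cons, Multiset.filter_cons_of_pos _ h]
        simp only [Fin.cons_zero, Fin.cons_succ]
        ring
      · simp only [h, if_false, hR]
        rw [← ih G, Finset.mul_sum]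
        refine Finset.sum_congr rfl fun y _ => ?_
        rw [Fin.prod_univ_succ, toMS_cons, Multiset.filter_cons_of_neg _ h]
        simp only [Fin.cons_zero, Fin.cons_succ]
        ring
    rw [Finset.sum_congr rfl (fun a _ => step a)]
    -- split the a-sum by q
    rw [← Finset.sum_filter_add_sum_filter_not Finset.univ q (fun a => P a * (if q a then Ra a else R))]
    have e1 : ∑ a ∈ Finset.univ.filter q, P a * (if q a then Ra a else R)
        = ∑ a ∈ Finset.univ.filter q, P a * Ra a := by
      refine Finset.sum_congr rfl fun a ha => ?_
      rw [if_pos (Finset.mem_filter.mp ha).2]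
    have e2 : ∑ a ∈ Finset.univ.filter (fun a => ¬ q a), P a * (if q a then Ra a else R)
        = (1-p) * R := by
      have e2' : ∑ a ∈ Finset.univ.filter (fun a => ¬ q a), P a * (if q a then Ra a else R)
          = ∑ a ∈ Finset.univ.filter (fun a => ¬ q a), P a * R :=
        Finset.sum_congr rfl fun a ha => by rw [if_neg (Finset.mem_filter.mp ha).2]
      rw [e2', ← Finset.sum_mul, hq1]
    rw [e1, e2]
    -- claim B
    have claimB : ∑ a ∈ Finset.univ.filter q, P a * Ra a
        = ∑ k ∈ Finset.range (N+1), (N.choose k : ℝ) * p^(k+1) * (1-p)^(N-k) * E (k+1) := by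
      rw [Finset.sum_filter]
      calc ∑ a : α, (if q a then P a * Ra a else 0)
          = ∑ a : α, (p * Pq a) * Ra a := by
            refine Finset.sum_congr rfl fun a _ => ?_
            rw [hpPq a]
            by_cases h : q a <;> simp [h]
        _ = ∑ a : α, ∑ k ∈ Finset.range (N+1),
              (N.choose k : ℝ) * p^k * (1-p)^(N-k) * ((p * Pq a) * Ea a k) := by
            refine Finset.sum_congr rfl fun a _ => ?_
            rw [hRa, Finset.mul_sum]
            exact Finset.sum_congr rfl fun k _ => by ring
        _ = ∑ k ∈ Finset.range (N+1), ∑ a : α,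
              (N.choose k : ℝ) * p^k * (1-p)^(N-k) * ((p * Pq a) * Ea a k) :=
            Finset.sum_comm
        _ = ∑ k ∈ Finset.range (N+1), (N.choose k : ℝ) * p^(k+1) * (1-p)^(N-k) * E (k+1) := by
            refine Finset.sum_congr rfl fun k _ => ?_
            rw [hEsucc k, Finset.mul_sum]
            exact Finset.sum_congr rfl fun a _ => by ring
    rw [claimB]
    -- now massage the RHS of the goal
    conv_rhs => rw [Finset.sum_range_succ']
    have hsub : ∀ k, N + 1 - (k+1) = N - k := fun k => by omega
    have split : ∀ k ∈ Finset.range (N+1),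
        ((N+1).choose (k+1) : ℝ) * p^(k+1) * (1-p)^(N+1-(k+1)) * E (k+1)
          = (N.choose k : ℝ) * p^(k+1) * (1-p)^(N-k) * E (k+1)
            + (N.choose (k+1) : ℝ) * p^(k+1) * (1-p)^(N-k) * E (k+1) := by
      intro k _
      rw [hsub k, Nat.choose_succ_succ]
      push_cast
      ring
    rw [Finset.sum_congr rfl split, Finset.sum_add_distrib]
    -- remains: B + (1-p) R = B + (B₂ + f0)
    have claimA : (1-p) * R
        = (∑ k ∈ Finset.range (N+1), (N.choose (k+1) : ℝ) * p^(k+1) * (1-p)^(N-k) * E (k+1))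
          + ((N+1).choose 0 : ℝ) * p^0 * (1-p)^(N+1-0) * E 0 := by
      have hR' : (1-p) * R = ∑ k ∈ Finset.range (N+1),
          (N.choose k : ℝ) * p^k * (1-p)^(N+1-k) * E k := by
        rw [hR, Finset.mul_sum]
        refine Finset.sum_congr rfl fun k hk => ?_
        have hk' : k < N + 1 := Finset.mem_range.mp hk
        have : N + 1 - k = (N - k) + 1 := by omega
        rw [this, pow_succ]
        ring
      rw [hR', Finset.sum_range_succ']
      have h2 : ∀ k ∈ Finset.range N,
          (N.choose (k+1) : ℝ) * p^(k+1) * (1-p)^(N+1-(k+1)) * E (k+1)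
            = (N.choose (k+1) : ℝ) * p^(k+1) * (1-p)^(N-k) * E (k+1) := by
        intro k _
        rw [hsub k]
      rw [Finset.sum_congr rfl h2]
      have h3 : ∑ k ∈ Finset.range (N+1), (N.choose (k+1) : ℝ) * p^(k+1) * (1-p)^(N-k) * E (k+1)
          = ∑ k ∈ Finset.range N, (N.choose (k+1) : ℝ) * p^(k+1) * (1-p)^(N-k) * E (k+1) := by
        rw [Finset.sum_range_succ, Nat.choose_succ_self]
        simp
      rw [h3]
      simp
    rw [claimA]
    ring

omit [Fintype α] in
lemma binom_tail (N m : ℕ) (p : ℝ) (hp0 : 0 ≤ p) (hp1 : p ≤ 1)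
    (h2m : 2*(m:ℝ) ≤ p * N) (hpN : 0 < p * N) :
    ∑ k ∈ Finset.range (N+1),
        (if k < m then (1:ℝ) else 0) * ((N.choose k : ℝ) * p^k * (1-p)^(N-k))
      ≤ 4 / (p * N) := by
  have hBin : ∀ k, 0 ≤ (N.choose k : ℝ) * p^k * (1-p)^(N-k) := fun k => by
    have h1 : (0:ℝ) ≤ 1 - p := by linarith
    positivity
  have step1 : ∑ k ∈ Finset.range (N+1),
      (if k < m then (1:ℝ) else 0) * ((N.choose k : ℝ) * p^k * (1-p)^(N-k))
      ≤ ∑ k ∈ Finset.range (N+1),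
        (4 / (p*N)^2) * (((N:ℝ)*p - k)^2 * ((N.choose k : ℝ) * p^k * (1-p)^(N-k))) := by
    refine Finset.sum_le_sum fun k _ => ?_
    by_cases hk : k < m
    · rw [if_pos hk]
      have hkm : (k:ℝ) + 1 ≤ (m:ℝ) := by exact_mod_cast hk
      have ht : p*N/2 ≤ (N:ℝ)*p - k := by nlinarith
      have hsq : (p*N/2)^2 ≤ ((N:ℝ)*p - k)^2 := by
        have h0 : (0:ℝ) ≤ p*N/2 := by positivity
        nlinarith
      have h4 : 1 ≤ 4 / (p*N)^2 * ((N:ℝ)*p - k)^2 := by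
        rw [div_mul_eq_mul_div, le_div_iff₀ (by positivity)]
        nlinarith
      have := mul_le_mul_of_nonneg_right h4 (hBin k)
      calc (1:ℝ) * ((N.choose k : ℝ) * p^k * (1-p)^(N-k))
          ≤ (4 / (p*N)^2 * ((N:ℝ)*p - k)^2) * ((N.choose k : ℝ) * p^k * (1-p)^(N-k)) := this
        _ = (4 / (p*N)^2) * (((N:ℝ)*p - k)^2 * ((N.choose k : ℝ) * p^k * (1-p)^(N-k))) := by
            ring
    · rw [if_neg hk]
      have h1 := hBin k
      have h2 : (0:ℝ) ≤ ((N:ℝ)*p - k)^2 := sq_nonneg _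
      have h3 : (0:ℝ) ≤ 4 / (p*N)^2 := by positivity
      rw [zero_mul]
      exact mul_nonneg h3 (mul_nonneg h2 h1)
  rw [← Finset.mul_sum, binom_variance] at step1
  refine step1.trans ?_
  have hv : (N:ℝ) * p * (1 - p) ≤ p * N := by nlinarith [mul_nonneg (mul_nonneg (Nat.cast_nonneg N : (0:ℝ) ≤ N) hp0) hp0]
  calc 4 / (p*N)^2 * ((N:ℝ) * p * (1 - p)) ≤ 4 / (p*N)^2 * (p*N) :=
        mul_le_mul_of_nonneg_left hv (by positivity)
    _ = 4 / (p*N) := by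
        field_simp

lemma percube (P : α → ℝ) (hP0 : ∀ a, 0 ≤ P a) (hP1 : ∑ a, P a = 1)
    (q : α → Prop)
    (p : ℝ) (hp : p = ∑ a ∈ Finset.univ.filter q, P a)
    (Pq : α → ℝ) (hPq : ∀ a, Pq a = if q a then P a / p else 0)
    (hppos : 0 < p)
    (G : Multiset α → ℝ) (hG0 : ∀ S, 0 ≤ G S) (hG1 : ∀ S, G S ≤ 1)
    (m N : ℕ) (ε' : ℝ) (hε' : 0 < ε')
    (hGood : ∀ k, m ≤ k → (∑ z : Fin k → α, (∏ j, Pq (z j)) * G (toMS z)) ≤ ε')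
    (h2m : 2*(m:ℝ) ≤ p * N) (hpN : 0 < p * N) :
    ∑ y : Fin N → α, (∏ j, P (y j)) * G ((toMS y).filter q) ≤ 4 / (p * N) + ε' := by
  have hp1 : p ≤ 1 := by
    rw [hp, ← hP1]
    exact Finset.sum_le_sum_of_subset_of_nonneg (Finset.filter_subset _ _)
      (fun a _ _ => hP0 a)
  have hPq0 : ∀ a, 0 ≤ Pq a := fun a => by
    rw [hPq a]; by_cases h : q a
    · simp only [h, if_true]; exact div_nonneg (hP0 a) hppos.le
    · simp [h]
  have hPq1 : ∑ a, Pq a = 1 := by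
    have : ∑ a, Pq a = ∑ a ∈ Finset.univ.filter q, P a / p := by
      rw [Finset.sum_filter]
      exact Finset.sum_congr rfl fun a _ => hPq a
    rw [this, ← Finset.sum_div, ← hp, div_self hppos.ne']
  have hE0 : ∀ k, 0 ≤ ∑ z : Fin k → α, (∏ j, Pq (z j)) * G (toMS z) := fun k =>
    Finset.sum_nonneg fun z _ =>
      mul_nonneg (Finset.prod_nonneg fun j _ => hPq0 _) (hG0 _)
  have hE1 : ∀ k, (∑ z : Fin k → α, (∏ j, Pq (z j)) * G (toMS z)) ≤ 1 := fun k => by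
    have h1 : (∑ z : Fin k → α, (∏ j, Pq (z j)) * G (toMS z))
        ≤ ∑ z : Fin k → α, ∏ j, Pq (z j) :=
      Finset.sum_le_sum fun z _ => by
        have := Finset.prod_nonneg (fun j (_ : j ∈ Finset.univ) => hPq0 (z j))
        nlinarith [hG1 (toMS z)]
    refine h1.trans ?_
    rw [indep (fun _ => Pq)]
    simp [hPq1]
  have hBin0 : ∀ k, 0 ≤ (N.choose k : ℝ) * p^k * (1-p)^(N-k) := fun k => by
    have h1 : (0:ℝ) ≤ 1 - p := by linarith
    positivity
  rw [cond_lemma P hP0 hP1 q p hp Pq hPq N G]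
  have key : ∀ k ∈ Finset.range (N+1),
      (N.choose k : ℝ) * p^k * (1-p)^(N-k) *
          (∑ z : Fin k → α, (∏ j, Pq (z j)) * G (toMS z))
        ≤ (if k < m then (1:ℝ) else 0) * ((N.choose k : ℝ) * p^k * (1-p)^(N-k))
          + ((N.choose k : ℝ) * p^k * (1-p)^(N-k)) * ε' := by
    intro k _
    by_cases hk : k < m
    · rw [if_pos hk]
      have h1 := mul_le_mul_of_nonneg_left (hE1 k) (hBin0 k)
      have h2 : 0 ≤ ((N.choose k : ℝ) * p^k * (1-p)^(N-k)) * ε' :=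
        mul_nonneg (hBin0 k) hε'.le
      linarith
    · rw [if_neg hk]
      have h1 := mul_le_mul_of_nonneg_left (hGood k (Nat.le_of_not_lt hk)) (hBin0 k)
      linarith
  calc ∑ k ∈ Finset.range (N+1), (N.choose k : ℝ) * p^k * (1-p)^(N-k) *
          (∑ z : Fin k → α, (∏ j, Pq (z j)) * G (toMS z))
      ≤ ∑ k ∈ Finset.range (N+1),
          ((if k < m then (1:ℝ) else 0) * ((N.choose k : ℝ) * p^k * (1-p)^(N-k))
            + ((N.choose k : ℝ) * p^k * (1-p)^(N-k)) * ε') := Finset.sum_le_sum key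
    _ = (∑ k ∈ Finset.range (N+1),
          (if k < m then (1:ℝ) else 0) * ((N.choose k : ℝ) * p^k * (1-p)^(N-k)))
        + (∑ k ∈ Finset.range (N+1), (N.choose k : ℝ) * p^k * (1-p)^(N-k)) * ε' := by
        rw [Finset.sum_add_distrib, Finset.sum_mul]
    _ ≤ 4 / (p * N) + ε' := by
        have h1 := binom_tail N m p hppos.le hp1 h2m hpN
        rw [binom_sum N p, one_mul]
        linarith

end AuxLemmas

/-- existence of a subcube partition with low expected error. If `A` learns
every `D ∈ 𝒟` to expected error `ε'` from `≥ m` i.i.d. samples, `𝒟` is closed under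
restrictions, `D*` admits a size-`s` depth-`d` subcube decomposition into `𝒟` witnessed by
`ρ₁,…,ρ_s`, and `m_train ≥ (s/ε')·max(2m,8)`, then training `A` on the restricted training
sets yields `E[error(P∘H, D*_f)] ≤ 2ε'`. -/
theorem true_partition_has_low_true_error
    (n m d s : ℕ) (hs : 1 ≤ s) (ε' : ℝ) (hε' : 0 < ε')
    (C : Set (Cube n → Bool)) (𝒟 : Set (Cube n → ℝ))
    (hclosed : ∀ D ∈ 𝒟, ∀ ρ : Rst n, 0 < rmass D ρ → condD D ρ ∈ 𝒟)
    (A : Multiset (Lab n) → Cube n → Bool)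
    (hA : ∀ D ∈ 𝒟, ∀ f ∈ C, ∀ k : ℕ, m ≤ k →
      ∑ y : Fin k → Lab n, (∏ i, labD D f (y i)) * errD (A (toMS y)) (labD D f) ≤ ε')
    (Dstar : Cube n → ℝ) (hD0 : ∀ x, 0 ≤ Dstar x) (hD1 : ∑ x : Cube n, Dstar x = 1)
    (ρ : Fin s → Rst n) (hρdepth : ∀ i, rdepth (ρ i) ≤ d)
    (hdisj : ∀ i j : Fin s, i ≠ j →
      ∀ x : Cube n, Consistent x (ρ i) → Consistent x (ρ j) → False)
    (hcover : ∀ x : Cube n, Dstar x ≠ 0 → ∃ i, Consistent x (ρ i))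
    (hdecomp : ∀ i : Fin s, 0 < rmass Dstar (ρ i) → condD Dstar (ρ i) ∈ 𝒟)
    (f : Cube n → Bool) (hf : f ∈ C)
    (mtrain : ℕ) (hmtrain : ((s : ℝ) / ε') * max (2 * (m : ℝ)) 8 ≤ (mtrain : ℝ)) :
    ∑ y : Fin mtrain → Lab n, (∏ i, labD Dstar f (y i)) *
        errDo (partHyp ρ
                (fun r => A ((toMS y).filter (fun p => Consistent p.1 r))))
              (labD Dstar f)
      ≤ 2 * ε' := by
  classical
  have hspos : (0:ℝ) < s := by exact_mod_cast hs
  set L : Lab n → ℝ := labD Dstar f with hL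
  have hL0 : ∀ pr : Lab n, 0 ≤ L pr := by
    intro pr; rw [hL]; unfold labD; split
    · exact hD0 _
    · exact le_refl 0
  have hL1 : ∑ pr : Lab n, L pr = 1 := by
    rw [hL]; unfold labD
    rw [Fintype.sum_prod_type, ← hD1]
    exact Finset.sum_congr rfl fun x _ => by simp
  have hite0 : ∀ (P : Prop) (inst : Decidable P) (pr : Lab n), 0 ≤ @ite _ P inst (L pr) 0 := by
    intro P inst pr
    split
    · exact hL0 pr
    · exact le_rfl
  -- per-cube empirical error pieces
  set e : Fin s → (Cube n → Bool) → ℝ := fun i h =>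
    ∑ pr : Lab n, if Consistent pr.1 (ρ i) ∧ h pr.1 ≠ pr.2 then L pr else 0 with he
  -- Step A : pointwise bound of the partition error by the per-cube pieces
  have stepA : ∀ H : Rst n → Cube n → Bool,
      errDo (partHyp ρ H) L ≤ ∑ i : Fin s, e i (H (ρ i)) := by
    intro H
    have swap : ∑ i : Fin s, e i (H (ρ i))
        = ∑ pr : Lab n, ∑ i : Fin s,
            (if Consistent pr.1 (ρ i) ∧ H (ρ i) pr.1 ≠ pr.2 then L pr else 0) := by
      rw [he]; exact Finset.sum_comm
    rw [swap]
    unfold errDo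
    refine Finset.sum_le_sum fun pr _ => ?_
    have hRnn : (0:ℝ) ≤ ∑ i : Fin s,
        (if Consistent pr.1 (ρ i) ∧ H (ρ i) pr.1 ≠ pr.2 then L pr else 0) :=
      Finset.sum_nonneg fun i _ => hite0 _ _ pr
    split
    case isFalse hmis => exact hRnn
    case isTrue hmis =>
        by_cases hLz : L pr = 0
        · exact le_trans (le_of_eq hLz) hRnn
        · have hDz : Dstar pr.1 ≠ 0 := by
            intro h0; apply hLz; rw [hL]; unfold labD; rw [h0]; simp
          have hex : ∃ i, Consistent pr.1 (ρ i) := hcover pr.1 hDz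
          have hcons : Consistent pr.1 (ρ hex.choose) := hex.choose_spec
          have hpart : partHyp ρ H pr.1 = some (H (ρ hex.choose) pr.1) := by
            unfold partHyp; rw [dif_pos hex]
          have hne : H (ρ hex.choose) pr.1 ≠ pr.2 := by
            intro hcontra; apply hmis; rw [hpart, hcontra]
          calc L pr = (if Consistent pr.1 (ρ hex.choose) ∧
                H (ρ hex.choose) pr.1 ≠ pr.2 then L pr else 0) := by
                rw [if_pos ⟨hcons, hne⟩]
            _ ≤ _ := Finset.single_le_sum (f := fun i =>
                (if Consistent pr.1 (ρ i) ∧ H (ρ i) pr.1 ≠ pr.2 then L pr else 0))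
                (fun i _ => hite0 _ _ pr) (Finset.mem_univ hex.choose)
  -- weights are nonnegative
  have hW0 : ∀ y : Fin mtrain → Lab n, (0:ℝ) ≤ ∏ i, L (y i) :=
    fun y => Finset.prod_nonneg fun i _ => hL0 _
  -- reduce the goal to per-cube sums
  have red : ∑ y : Fin mtrain → Lab n, (∏ i, L (y i)) *
        errDo (partHyp ρ (fun r => A ((toMS y).filter (fun p => Consistent p.1 r)))) L
      ≤ ∑ i : Fin s, ∑ y : Fin mtrain → Lab n, (∏ j, L (y j)) *
          e i (A ((toMS y).filter (fun pr => Consistent pr.1 (ρ i)))) := by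
    rw [Finset.sum_comm]
    refine Finset.sum_le_sum fun y _ => ?_
    rw [← Finset.mul_sum]
    exact mul_le_mul_of_nonneg_left
      (stepA (fun r => A ((toMS y).filter (fun p => Consistent p.1 r)))) (hW0 y)
  refine red.trans ?_
  -- mtrain is positive and large
  have hmax8 : (8:ℝ) ≤ max (2 * (m : ℝ)) 8 := le_max_right _ _
  have hsε : (0:ℝ) < (s:ℝ)/ε' := by positivity
  have hNbig : (8:ℝ) * s / ε' ≤ (mtrain:ℝ) := by
    refine le_trans ?_ hmtrain
    rw [div_le_iff₀ hε']
    have heq : (s:ℝ)/ε' * max (2*(m:ℝ)) 8 * ε' = s * max (2*(m:ℝ)) 8 := by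
      field_simp
    rw [heq]
    have := mul_le_mul_of_nonneg_left hmax8 hspos.le
    linarith
  have hNpos : (0:ℝ) < (mtrain:ℝ) :=
    lt_of_lt_of_le (by positivity) hNbig
  -- per-cube bound
  have cube : ∀ i : Fin s, ∑ y : Fin mtrain → Lab n, (∏ j, L (y j)) *
        e i (A ((toMS y).filter (fun pr => Consistent pr.1 (ρ i))))
      ≤ ε'/s + rmass Dstar (ρ i) * ε' := by
    intro i
    set q : Lab n → Prop := fun pr => Consistent pr.1 (ρ i) with hq
    set p : ℝ := rmass Dstar (ρ i) with hpdef
    have hp0 : 0 ≤ p := Finset.sum_nonneg fun x _ => hD0 x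
    have hpe : p = ∑ pr ∈ Finset.univ.filter q, L pr := by
      rw [Finset.sum_filter, Fintype.sum_prod_type, hpdef]
      unfold rmass
      rw [Finset.sum_filter]
      refine Finset.sum_congr rfl fun x _ => ?_
      by_cases h : Consistent x (ρ i)
      · rw [if_pos h]
        simp [hq, h, hL, labD]
      · simp [hq, h]
    by_cases hppos : 0 < p
    · -- main case
      have hDc := hdecomp i (hpdef ▸ hppos)
      set Pq : Lab n → ℝ := labD (condD Dstar (ρ i)) f with hPqdef
      have hPq : ∀ pr : Lab n, Pq pr = if q pr then L pr / p else 0 := by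
        rintro ⟨x, b⟩
        rw [hPqdef, hL]
        unfold labD condD
        by_cases h : Consistent x (ρ i)
        · by_cases hb : b = f x
          · simp [hq, h, hb, ← hpdef]
          · simp [hq, h, hb]
        · simp [hq, h]
      set G : Multiset (Lab n) → ℝ := fun S => errD (A S) Pq with hG
      have hPq0 : ∀ pr, 0 ≤ Pq pr := fun pr => by
        rw [hPq pr]; split
        · exact div_nonneg (hL0 pr) hp0
        · exact le_rfl
      have hG0 : ∀ S, 0 ≤ G S := by
        intro S
        simp only [hG]
        unfold errD
        refine Finset.sum_nonneg fun pr _ => ?_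
        split
        · exact hPq0 pr
        · exact le_rfl
      have hPqsum : ∑ pr : Lab n, Pq pr = 1 := by
        have h1 : ∑ pr : Lab n, Pq pr = ∑ pr ∈ Finset.univ.filter q, L pr / p := by
          rw [Finset.sum_filter]
          exact Finset.sum_congr rfl fun pr _ => hPq pr
        rw [h1, ← Finset.sum_div, ← hpe, div_self hppos.ne']
      have hG1 : ∀ S, G S ≤ 1 := fun S => by
        rw [hG]
        calc errD (A S) Pq ≤ ∑ pr : Lab n, Pq pr := by
              unfold errD
              refine Finset.sum_le_sum fun pr _ => ?_
              split
              · exact le_rfl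
              · exact hPq0 pr
          _ = 1 := hPqsum
      have hGood : ∀ k, m ≤ k →
          (∑ z : Fin k → Lab n, (∏ j, Pq (z j)) * G (toMS z)) ≤ ε' :=
        fun k hk => hA (condD Dstar (ρ i)) hDc f hf k hk
      have e_eq : ∀ h : Cube n → Bool, e i h = p * errD h Pq := by
        intro h
        simp only [he]
        unfold errD
        rw [Finset.mul_sum]
        refine Finset.sum_congr rfl fun pr _ => ?_
        rw [hPq pr]
        by_cases hc : Consistent pr.1 (ρ i)
        · have hcq : q pr := by simp [hq, hc]
          by_cases hm : h pr.1 ≠ pr.2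
          · rw [if_pos ⟨hc, hm⟩, if_pos hm, if_pos hcq, mul_div_cancel₀ _ hppos.ne']
          · rw [if_neg (fun hand => hm hand.2), if_neg hm, mul_zero]
        · have hcq : ¬ q pr := by simp [hq, hc]
          rw [if_neg (fun hand => hc hand.1), if_neg hcq]
          split
          · rw [mul_zero]
          · rw [mul_zero]
      have main_eq : ∑ y : Fin mtrain → Lab n, (∏ j, L (y j)) *
            e i (A ((toMS y).filter q))
          = p * ∑ y : Fin mtrain → Lab n, (∏ j, L (y j)) * G ((toMS y).filter q) := by
        rw [Finset.mul_sum]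
        refine Finset.sum_congr rfl fun y _ => ?_
        rw [e_eq, hG]
        ring
      rw [main_eq]
      by_cases hbig : p ≤ ε'/s
      · -- low-mass subcube
        have hle1 : ∑ y : Fin mtrain → Lab n, (∏ j, L (y j)) * G ((toMS y).filter q) ≤ 1 := by
          calc ∑ y : Fin mtrain → Lab n, (∏ j, L (y j)) * G ((toMS y).filter q)
              ≤ ∑ y : Fin mtrain → Lab n, (∏ j, L (y j)) * 1 :=
                Finset.sum_le_sum fun y _ => mul_le_mul_of_nonneg_left (hG1 _) (hW0 y)
            _ = ∑ y : Fin mtrain → Lab n, ∏ j, L (y j) := by simp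
            _ = 1 := by
                rw [indep (fun _ => L)]
                simp [hL1]
        have h1 : p * ∑ y : Fin mtrain → Lab n, (∏ j, L (y j)) * G ((toMS y).filter q) ≤ p * 1 :=
          mul_le_mul_of_nonneg_left hle1 hp0
        have h2 : 0 ≤ p * ε' := mul_nonneg hp0 hε'.le
        linarith
      · -- high-mass subcube
        push_neg at hbig
        have hp1' : p ≤ 1 := by
          rw [hpe, ← hL1]
          exact Finset.sum_le_sum_of_subset_of_nonneg (Finset.filter_subset _ _)
            (fun pr _ _ => hL0 pr)
        have hXX : ∀ X : ℝ, (ε'/(s:ℝ)) * (((s:ℝ)/ε') * X) = X := fun X => by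
          field_simp
        have hmaxN : max (2*(m:ℝ)) 8 ≤ (ε'/(s:ℝ)) * mtrain := by
          have h1 := mul_le_mul_of_nonneg_left hmtrain (le_of_lt (div_pos hε' hspos))
          calc max (2*(m:ℝ)) 8 = (ε'/(s:ℝ)) * (((s:ℝ)/ε') * max (2*(m:ℝ)) 8) :=
                (hXX _).symm
            _ ≤ (ε'/(s:ℝ)) * mtrain := h1
        have h2m : 2*(m:ℝ) ≤ p * mtrain := by
          have ha := le_trans (le_max_left (2*(m:ℝ)) 8) hmaxN
          have h3 : (ε'/(s:ℝ)) * mtrain ≤ p * mtrain :=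
            mul_le_mul_of_nonneg_right (le_of_lt hbig) (Nat.cast_nonneg _)
          linarith
        have hpN : 0 < p * mtrain := mul_pos hppos hNpos
        have hper := percube L hL0 hL1 q p hpe Pq hPq hppos G hG0 hG1 m mtrain ε' hε'
          hGood h2m hpN
        have hcalc : p * ∑ y : Fin mtrain → Lab n, (∏ j, L (y j)) * G ((toMS y).filter q)
            ≤ p * (4 / (p * mtrain) + ε') := mul_le_mul_of_nonneg_left hper hp0
        have heq : p * (4 / (p * mtrain) + ε') = 4 / mtrain + p * ε' := by
          field_simp
        have hfin : 4 / (mtrain:ℝ) ≤ ε'/s := by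
          rw [div_le_div_iff₀ hNpos hspos]
          have h5 := mul_le_mul_of_nonneg_left hNbig hε'.le
          have h6 : ε' * ((8:ℝ) * s / ε') = 8 * s := by field_simp
          rw [h6] at h5
          nlinarith
        linarith [hcalc, heq ▸ hcalc]
    · -- zero-mass subcube
      have hpz : p = 0 := le_antisymm (not_lt.mp hppos) hp0
      have he0 : ∀ h : Cube n → Bool, e i h ≤ 0 := by
        intro h
        have hb : e i h ≤ ∑ pr ∈ Finset.univ.filter q, L pr := by
          simp only [he]
          rw [Finset.sum_filter]
          refine Finset.sum_le_sum fun pr _ => ?_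
          split
          · rename_i hand
            have : q pr := by simp [hq, hand.1]
            rw [if_pos this]
          · exact hite0 _ _ pr
        rw [← hpe, hpz] at hb
        exact hb
      have h1 : ∑ y : Fin mtrain → Lab n, (∏ j, L (y j)) *
            e i (A ((toMS y).filter q)) ≤ 0 :=
        Finset.sum_nonpos fun y _ => mul_nonpos_iff.mpr (Or.inl ⟨hW0 y, he0 _⟩)
      have h2 : 0 ≤ p * ε' := mul_nonneg hp0 hε'.le
      have h3 : 0 < ε'/(s:ℝ) := div_pos hε' hspos
      linarith
  refine (Finset.sum_le_sum fun i _ => cube i).trans ?_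
  rw [Finset.sum_add_distrib, ← Finset.sum_mul]
  have hsum1 : ∑ _i : Fin s, ε'/s = ε' := by
    rw [Finset.sum_const, Finset.card_univ, Fintype.card_fin, nsmul_eq_mul]
    field_simp
  have hmass : ∑ i : Fin s, rmass Dstar (ρ i) ≤ 1 := by
    unfold rmass
    have swap : ∑ i : Fin s, ∑ x ∈ Finset.univ.filter (fun x => Consistent x (ρ i)), Dstar x
        = ∑ x : Cube n, ∑ i : Fin s, (if Consistent x (ρ i) then Dstar x else 0) := by
      rw [← Finset.sum_comm]
      exact Finset.sum_congr rfl fun i _ => Finset.sum_filter _ _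
    rw [swap, ← hD1]
    refine Finset.sum_le_sum fun x _ => ?_
    by_cases hex : ∃ i, Consistent x (ρ i)
    · obtain ⟨i₀, hi₀⟩ := hex
      rw [Finset.sum_eq_single i₀]
      · rw [if_pos hi₀]
      · intro j _ hj
        rw [if_neg]
        intro hcons
        exact hdisj j i₀ hj x hcons hi₀
      · intro h; exact absurd (Finset.mem_univ i₀) h
    · rw [Finset.sum_eq_zero]
      · exact hD0 x
      · intro j _
        rw [if_neg]
        intro hcons; exact hex ⟨j, hcons⟩
  have h2 : (∑ i : Fin s, rmass Dstar (ρ i)) * ε' ≤ 1 * ε' :=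
    mul_le_mul_of_nonneg_right hmass hε'.le
  rw [hsum1]
  linarith
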